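/- arXiv:1805.03772 — 2 statements merged into one kernel-verified Lean document; each statement's English description precedes it below -/
import Mathlib

section
/- Let w, w' ∈ W with n = ℓ(w)+ℓ(w'), and suppose that the support of w equals the full set S of simple reflections, or the support of w' equals S. Then the coefficient of q^n in N^{w,w'} equals 1. -/
open Polynomial List

/-- Coefficient of `X * p`. -/
lemma coeff_Xmul (p : Polynomial ℚ) (k : ℕ) :
    (Polynomial.X * p).coeff k = if k = 0 then 0 else p.coeff (k - 1) := by
  cases k with
  | zero => rw [Polynomial.mul_coeff_zero, Polynomial.coeff_X_zero, zero_mul]; simp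
  | succ k => rw [Polynomial.coeff_X_mul]; simp


namespace CoxAux

variable {B W : Type} [Group W] {M : CoxeterMatrix B} (cs : CoxeterSystem M W)

local prefix:100 "s" => cs.simple
local prefix:100 "π" => cs.wordProd
local prefix:100 "ℓ" => cs.length

open scoped Classical

/-- The reflection-sign map `σᵢ` on `W × ℤˣ`. -/
noncomputable def sigma (i : B) : Function.End (W × ℤˣ) :=
  fun p => (s i * p.1 * s i, (if p.1 = s i then -1 else 1) * p.2)

lemma sj_mul_c (i j : B) : s j * (s i * s j) = (s i * s j)⁻¹ * s j := by
  rw [mul_inv_rev, cs.inv_simple, cs.inv_simple, mul_assoc]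

lemma sj_pow_comm (i j : B) (a : ℕ) :
    s j * (s i * s j) ^ a = ((s i * s j) ^ a)⁻¹ * s j := by
  induction a with
  | zero => simp
  | succ a ih =>
      have h1 : s j * (s i * s j) ^ (a + 1) = (s j * (s i * s j) ^ a) * (s i * s j) := by
        rw [pow_succ, mul_assoc]
      rw [h1, ih, mul_assoc, sj_mul_c, ← mul_assoc, ← mul_inv_rev, ← pow_succ']

lemma conj_pow_sj (i j : B) (a : ℕ) :
    ((s i * s j) ^ a)⁻¹ * s j * (s i * s j) ^ a = ((s i * s j) ^ (2 * a))⁻¹ * s j := by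
  have h := sj_pow_comm cs i j a
  calc ((s i * s j) ^ a)⁻¹ * s j * (s i * s j) ^ a
      = ((s i * s j) ^ a)⁻¹ * (s j * (s i * s j) ^ a) := by rw [mul_assoc]
    _ = ((s i * s j) ^ a)⁻¹ * (((s i * s j) ^ a)⁻¹ * s j) := by rw [h]
    _ = ((s i * s j) ^ (2 * a))⁻¹ * s j := by
        rw [two_mul, pow_add, mul_inv_rev, mul_assoc]

lemma sigma_mul_apply (i j : B) (p : W × ℤˣ) :
    (sigma cs i * sigma cs j) p =
      ((s i * s j) * p.1 * (s i * s j)⁻¹,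
        ((if s j * p.1 * s j = s i then (-1 : ℤˣ) else 1) *
          (if p.1 = s j then (-1 : ℤˣ) else 1)) * p.2) := by
  show sigma cs i (sigma cs j p) = _
  simp only [sigma, Prod.mk.injEq]
  constructor
  · group
    simp [mul_assoc]
  · exact (mul_assoc _ _ _).symm

/-- Iterate formula for `(σᵢ σⱼ)^k`. -/
lemma sigma_mul_pow_apply (i j : B) (k : ℕ) (p : W × ℤˣ) :
    ((sigma cs i * sigma cs j) ^ k) p =
      ((s i * s j) ^ k * p.1 * ((s i * s j) ^ k)⁻¹,
        (∏ a ∈ Finset.range k,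
          ((if s j * ((s i * s j) ^ a * p.1 * ((s i * s j) ^ a)⁻¹) * s j = s i then (-1 : ℤˣ) else 1) *
            (if (s i * s j) ^ a * p.1 * ((s i * s j) ^ a)⁻¹ = s j then (-1 : ℤˣ) else 1))) * p.2) := by
  induction k generalizing p with
  | zero => show p = _; simp
  | succ k ih =>
      have hp : ((sigma cs i * sigma cs j) ^ (k + 1)) p
          = ((sigma cs i * sigma cs j) ^ k) ((sigma cs i * sigma cs j) p) := by
        rw [pow_succ]; rfl
      rw [hp, sigma_mul_apply, ih]
      dsimp only
      simp only [Prod.mk.injEq]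
      constructor
      · rw [pow_succ]
        simp only [mul_inv_rev, mul_assoc]
      · rw [Finset.prod_range_succ', ← mul_assoc]
        congr 2
        · apply Finset.prod_congr rfl
          intro a _
          have h2 : (s i * s j) ^ a * ((s i * s j) * p.1 * (s i * s j)⁻¹) * ((s i * s j) ^ a)⁻¹
              = (s i * s j) ^ (a + 1) * p.1 * ((s i * s j) ^ (a + 1))⁻¹ := by
            rw [pow_succ]
            simp only [mul_inv_rev, mul_assoc]
          rw [h2]
        · simp

lemma prod_sign_aux {G : Type*} [Group G] (c d : G) (m : ℕ) (hc : c ^ m = 1) :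
    (∏ a ∈ Finset.range m,
      ((if c ^ (2 * a + 1) = d then (-1 : ℤˣ) else 1) *
        (if c ^ (2 * a) = d then (-1 : ℤˣ) else 1))) = 1 := by
  classical
  have key : ∀ k : ℕ, (∏ a ∈ Finset.range k,
      ((if c ^ (2 * a + 1) = d then (-1 : ℤˣ) else 1) *
        (if c ^ (2 * a) = d then (-1 : ℤˣ) else 1)))
      = ∏ r ∈ Finset.range (2 * k), (if c ^ r = d then (-1 : ℤˣ) else 1) := by
    intro k
    induction k with
    | zero => simp
    | succ k ih =>
        rw [Finset.prod_range_succ, ih, show 2 * (k + 1) = (2 * k + 1) + 1 by ring,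
          Finset.prod_range_succ, Finset.prod_range_succ, mul_comm
          (if c ^ (2 * k + 1) = d then (-1 : ℤˣ) else 1)
          (if c ^ (2 * k) = d then (-1 : ℤˣ) else 1), ← mul_assoc]
  rw [key, two_mul, Finset.prod_range_add]
  have h2 : ∀ r : ℕ, c ^ (m + r) = c ^ r := fun r => by rw [pow_add, hc, one_mul]
  have h3 : (∏ r ∈ Finset.range m, (if c ^ (m + r) = d then (-1 : ℤˣ) else 1))
      = ∏ r ∈ Finset.range m, (if c ^ r = d then (-1 : ℤˣ) else 1) := by
    apply Finset.prod_congr rfl; intro r _; rw [h2]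
  rw [h3, ← sq, ← Finset.prod_pow]
  apply Finset.prod_eq_one
  intro r _
  rcases Int.units_eq_one_or (if c ^ r = d then (-1 : ℤˣ) else 1) with h | h <;> rw [h] <;> decide

lemma liftable : M.IsLiftable (sigma cs) := by
  intro i j
  funext p
  rw [show ((1 : Function.End (W × ℤˣ))) p = p from rfl, sigma_mul_pow_apply]
  have hc : (s i * s j) ^ M i j = 1 := cs.simple_mul_simple_pow i j
  have cond1 : ∀ a : ℕ, ((s i * s j) ^ a * p.1 * ((s i * s j) ^ a)⁻¹ = s j)
      ↔ ((s i * s j) ^ (2 * a) = s j * p.1⁻¹) := by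
    intro a
    constructor
    · intro h
      have h' := congrArg (fun z => ((s i * s j) ^ a)⁻¹ * z * (s i * s j) ^ a) h
      have hp1 : p.1 = ((s i * s j) ^ a)⁻¹ * s j * (s i * s j) ^ a := by
        rw [← h']; group
      rw [conj_pow_sj] at hp1
      rw [hp1]; group
    · intro h
      have hp1 : p.1 = ((s i * s j) ^ (2 * a))⁻¹ * s j := by rw [h]; group
      rw [← conj_pow_sj] at hp1
      rw [hp1]; group
  have cond2 : ∀ a : ℕ, (s j * ((s i * s j) ^ a * p.1 * ((s i * s j) ^ a)⁻¹) * s j = s i)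
      ↔ ((s i * s j) ^ (2 * a + 1) = s j * p.1⁻¹) := by
    intro a
    have hsjs : ((s i * s j) ^ a)⁻¹ * (s j * (s i * s j)) * (s i * s j) ^ a
        = ((s i * s j) ^ (2 * a + 1))⁻¹ * s j := by
      have e1 : s j * (s i * s j) * (s i * s j) ^ a = s j * (s i * s j) ^ (a + 1) := by
        rw [pow_succ', mul_assoc]
      calc ((s i * s j) ^ a)⁻¹ * (s j * (s i * s j)) * (s i * s j) ^ a
          = ((s i * s j) ^ a)⁻¹ * (s j * (s i * s j) ^ (a + 1)) := by
            rw [mul_assoc, e1]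
        _ = ((s i * s j) ^ a)⁻¹ * (((s i * s j) ^ (a + 1))⁻¹ * s j) := by rw [sj_pow_comm]
        _ = ((s i * s j) ^ (a + 1) * (s i * s j) ^ a)⁻¹ * s j := by
            rw [mul_inv_rev, mul_assoc]
        _ = ((s i * s j) ^ (2 * a + 1))⁻¹ * s j := by
            rw [← pow_add, show a + 1 + a = 2 * a + 1 by ring]
    constructor
    · intro h
      have h' : (s i * s j) ^ a * p.1 * ((s i * s j) ^ a)⁻¹ = s j * (s i * s j) := by
        have : s j * (s j * ((s i * s j) ^ a * p.1 * ((s i * s j) ^ a)⁻¹) * s j) * s j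
            = s j * s i * s j := by rw [h]
        rw [← mul_assoc, ← mul_assoc, cs.simple_mul_simple_self, one_mul, mul_assoc,
          cs.simple_mul_simple_self, mul_one] at this
        rw [this, mul_assoc]
      have h'' := congrArg (fun z => ((s i * s j) ^ a)⁻¹ * z * (s i * s j) ^ a) h'
      have hp1 : p.1 = ((s i * s j) ^ a)⁻¹ * (s j * (s i * s j)) * (s i * s j) ^ a := by
        rw [← h'']; group
      rw [hsjs] at hp1
      rw [hp1]; group
    · intro h
      have hp1 : p.1 = ((s i * s j) ^ (2 * a + 1))⁻¹ * s j := by rw [h]; group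
      rw [← hsjs] at hp1
      rw [hp1]
      have expand : (s i * s j) ^ a * (((s i * s j) ^ a)⁻¹ * (s j * (s i * s j)) * (s i * s j) ^ a)
          * ((s i * s j) ^ a)⁻¹ = s j * (s i * s j) := by group
      rw [expand, ← mul_assoc, ← mul_assoc, cs.simple_mul_simple_self, one_mul, mul_assoc,
        cs.simple_mul_simple_self, mul_one]
  have : (∏ a ∈ Finset.range (M i j),
      ((if s j * ((s i * s j) ^ a * p.1 * ((s i * s j) ^ a)⁻¹) * s j = s i then (-1 : ℤˣ) else 1) *
        (if (s i * s j) ^ a * p.1 * ((s i * s j) ^ a)⁻¹ = s j then (-1 : ℤˣ) else 1))) = 1 := by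
    have congrprod : ∀ a ∈ Finset.range (M i j),
        ((if s j * ((s i * s j) ^ a * p.1 * ((s i * s j) ^ a)⁻¹) * s j = s i then (-1 : ℤˣ) else 1) *
          (if (s i * s j) ^ a * p.1 * ((s i * s j) ^ a)⁻¹ = s j then (-1 : ℤˣ) else 1))
        = ((if (s i * s j) ^ (2 * a + 1) = s j * p.1⁻¹ then (-1 : ℤˣ) else 1) *
          (if (s i * s j) ^ (2 * a) = s j * p.1⁻¹ then (-1 : ℤˣ) else 1)) := by
      intro a _
      rw [if_congr (cond2 a) rfl rfl, if_congr (cond1 a) rfl rfl]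
    rw [Finset.prod_congr rfl congrprod]
    exact prod_sign_aux _ _ _ hc
  rw [this, hc]
  simp

/-- The sign representation `θ : W →* End (W × ℤˣ)`. -/
noncomputable def theta : W →* Function.End (W × ℤˣ) :=
  cs.lift ⟨fun i => sigma cs i, liftable cs⟩

lemma theta_simple (i : B) : theta cs (s i) = sigma cs i :=
  cs.lift_apply_simple (liftable cs) i

lemma theta_wordProd (ω : List B) (t : W) (ε : ℤˣ) :
    theta cs (π ω) (t, ε) =
      ((π ω) * t * (π ω)⁻¹, (-1 : ℤˣ) ^ (List.count t (cs.rightInvSeq ω)) * ε) := by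
  induction ω generalizing ε with
  | nil => simp [CoxeterSystem.wordProd_nil]; rfl
  | cons i ω ih =>
      have hmul : theta cs (π (i :: ω)) (t, ε) = theta cs (s i) (theta cs (π ω) (t, ε)) := by
        rw [cs.wordProd_cons, map_mul]; rfl
      rw [hmul, ih, theta_simple]
      show (s i * (π ω * t * (π ω)⁻¹) * s i, _) = _
      have hris : cs.rightInvSeq (i :: ω) = ((π ω)⁻¹ * s i * (π ω)) :: cs.rightInvSeq ω := rfl
      rw [hris]
      simp only [Prod.mk.injEq]
      constructor
      · rw [cs.wordProd_cons, mul_inv_rev, cs.inv_simple]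
        simp only [mul_assoc]
      · rw [List.count_cons]
        have hiff : (π ω * t * (π ω)⁻¹ = s i) ↔ ((π ω)⁻¹ * s i * (π ω) == t) = true := by
          rw [beq_iff_eq]
          constructor
          · intro h; rw [← h]; group
          · intro h; rw [← h]; group
        by_cases hcase : π ω * t * (π ω)⁻¹ = s i
        · rw [if_pos hcase, if_pos (hiff.mp hcase), pow_succ]
          simp [mul_comm, mul_left_comm, mul_assoc]
        · rw [if_neg hcase, if_neg (fun hh => hcase (hiff.mpr hh))]
          simp

/-- The sign `η(w, t)`. -/
noncomputable def eta (w t : W) : ℤˣ := (theta cs w (t, 1)).2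

lemma eta_wordProd (ω : List B) (t : W) :
    eta cs (π ω) t = (-1 : ℤˣ) ^ (List.count t (cs.rightInvSeq ω)) := by
  unfold eta
  rw [theta_wordProd, mul_one]

lemma theta_apply (w t : W) (ε : ℤˣ) :
    theta cs w (t, ε) = (w * t * w⁻¹, eta cs w t * ε) := by
  obtain ⟨ω, _, rfl⟩ := cs.exists_reduced_word' w
  rw [theta_wordProd, eta_wordProd]

lemma inversion_of_eta_neg (w t : W) (h : eta cs w t = -1) : ℓ (w * t) < ℓ w := by
  obtain ⟨ω, hred, rfl⟩ := cs.exists_reduced_word' w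
  rw [eta_wordProd] at h
  have hcount : List.count t (cs.rightInvSeq ω) ≠ 0 := by
    intro h0
    rw [h0, pow_zero] at h
    exact absurd h (by decide)
  have hmem : t ∈ cs.rightInvSeq ω := by
    rw [← List.count_pos_iff]
    omega
  exact (cs.isRightInversion_of_mem_rightInvSeq hred hmem).2

lemma eta_simple_of_not_descent (w : W) (i : B) (h : ¬ cs.IsRightDescent w i) :
    eta cs w (s i) = 1 := by
  rcases Int.units_eq_one_or (eta cs w (s i)) with h1 | h1
  · exact h1
  · exact absurd (inversion_of_eta_neg cs w (s i) h1) h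

lemma eta_simple_of_descent (w : W) (i : B) (h : cs.IsRightDescent w i) :
    eta cs w (s i) = -1 := by
  have hw : w = (w * s i) * s i := (cs.simple_mul_simple_cancel_right i).symm
  have hth : theta cs w (s i, 1) = theta cs (w * s i) (theta cs (s i) (s i, 1)) := by
    conv_lhs => rw [hw]
    rw [map_mul]; rfl
  have hsi : theta cs (s i) (s i, 1) = (s i, -1) := by
    rw [theta_simple]
    show (s i * s i * s i, _) = _
    rw [cs.simple_mul_simple_self, one_mul, if_pos rfl, mul_one]
  rw [hsi, theta_apply, theta_apply] at hth
  have h2 : eta cs w (s i) = eta cs (w * s i) (s i) * (-1) := by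
    have := congrArg Prod.snd hth
    simpa using this
  rw [eta_simple_of_not_descent cs (w * s i) i
    (cs.isRightDescent_iff_not_isRightDescent_mul.mp h), one_mul] at h2
  exact h2

lemma eta_mul (u v t : W) : eta cs (u * v) t = eta cs u (v * t * v⁻¹) * eta cs v t := by
  unfold eta
  rw [map_mul]
  show (theta cs u (theta cs v (t, 1))).2 = _
  rw [theta_apply, theta_apply, theta_apply, mul_one, mul_one]

lemma length_mul_inv_of_all_rightDescent {x : W} (hx : ∀ i, cs.IsRightDescent x i) :
    ∀ u : W, ℓ (x * u⁻¹) + ℓ u = ℓ x := by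
  suffices H : ∀ n : ℕ, ∀ u : W, ℓ u = n → ℓ (x * u⁻¹) + ℓ u = ℓ x from fun u => H _ u rfl
  intro n
  induction n using Nat.strong_induction_on with
  | _ n ih =>
    intro u hu
    by_cases h1 : u = 1
    · subst h1; simp
    · obtain ⟨i, hi⟩ := cs.exists_rightDescent_of_ne_one h1
      have hlen : ℓ (u * s i) + 1 = ℓ u := cs.isRightDescent_iff.mp hi
      have ihu' := ih (ℓ (u * s i)) (by omega) (u * s i) rfl
      have hnd : ¬ cs.IsRightDescent (u * s i) i :=
        cs.isRightDescent_iff_not_isRightDescent_mul.mp hi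
      have heta : eta cs x (s i) = -1 := eta_simple_of_descent cs x i (hx i)
      have hx' : x = (x * (u * s i)⁻¹) * (u * s i) := by group
      have hmul := eta_mul cs (x * (u * s i)⁻¹) (u * s i) (s i)
      rw [← hx'] at hmul
      rw [heta, eta_simple_of_not_descent cs (u * s i) i hnd, mul_one] at hmul
      have hlt := inversion_of_eta_neg cs (x * (u * s i)⁻¹)
        ((u * s i) * s i * (u * s i)⁻¹) hmul.symm
      have hrw : (x * (u * s i)⁻¹) * ((u * s i) * s i * (u * s i)⁻¹) = x * u⁻¹ := by
        group
      rw [hrw] at hlt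
      have hge : ℓ x ≤ ℓ (x * u⁻¹) + ℓ u := by
        have h5 := cs.length_mul_le (x * u⁻¹) u
        rwa [inv_mul_cancel_right] at h5
      omega

lemma all_rightDescent_unique {x y : W} (hx : ∀ i, cs.IsRightDescent x i)
    (hy : ∀ i, cs.IsRightDescent y i) : x = y := by
  have h1 := length_mul_inv_of_all_rightDescent cs hx y
  have h2 := length_mul_inv_of_all_rightDescent cs hy x
  have h3 : ℓ (y * x⁻¹) = ℓ (x * y⁻¹) := by
    rw [← cs.length_inv (x * y⁻¹)]
    congr 1
    group
  have h4 : ℓ (x * y⁻¹) = 0 := by omega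
  have h5 := cs.length_eq_zero_iff.mp h4
  rw [mul_inv_eq_one] at h5
  exact h5

lemma all_leftDescent_unique {x y : W} (hx : ∀ i, cs.IsLeftDescent x i)
    (hy : ∀ i, cs.IsLeftDescent y i) : x = y := by
  have : x⁻¹ = y⁻¹ := by
    apply all_rightDescent_unique cs
    · intro i; exact cs.isRightDescent_inv_iff.mpr (hx i)
    · intro i; exact cs.isRightDescent_inv_iff.mpr (hy i)
  exact inv_injective this

lemma exists_all_descents [Fintype W] :
    ∃ x₀ : W, (∀ i, cs.IsLeftDescent x₀ i) ∧ (∀ i, cs.IsRightDescent x₀ i) := by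
  obtain ⟨x₀, hx₀⟩ := Finite.exists_max cs.length
  refine ⟨x₀, fun i => ?_, fun i => ?_⟩
  · exact lt_of_le_of_ne (hx₀ (s i * x₀)) (cs.length_simple_mul_ne x₀ i)
  · exact lt_of_le_of_ne (hx₀ (x₀ * s i)) (cs.length_mul_simple_ne x₀ i)

set_option linter.unusedSectionVars false

lemma simple_ne_one_aux (i : B) : s i ≠ 1 := by
  intro h
  have h1 := cs.length_simple i
  rw [h, cs.length_one] at h1
  omega

lemma simple_mul_eq_iff (i : B) (z y : W) : s i * z = y ↔ z = s i * y := by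
  constructor
  · rintro rfl; rw [cs.simple_mul_simple_cancel_left]
  · rintro rfl; rw [cs.simple_mul_simple_cancel_left]

lemma mul_simple_eq_iff (i : B) (z y : W) : z * s i = y ↔ z = y * s i := by
  constructor
  · rintro rfl; rw [cs.simple_mul_simple_cancel_right]
  · rintro rfl; rw [cs.simple_mul_simple_cancel_right]

lemma descent_flip {i : B} {z y : W} (h : s i * z = y) :
    cs.IsLeftDescent z i ↔ ¬ cs.IsLeftDescent y i := by
  subst h
  exact cs.isLeftDescent_iff_not_isLeftDescent_mul

lemma descent_flip_right {i : B} {z y : W} (h : z * s i = y) :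
    cs.IsRightDescent z i ↔ ¬ cs.IsRightDescent y i := by
  subst h
  exact cs.isRightDescent_iff_not_isRightDescent_mul

section Hecke

variable [Fintype W]

local notation "𝕢" => (RatFunc.X : RatFunc ℚ)

variable {H : Type} [Ring H] [Algebra (RatFunc ℚ) H]
  (T : Module.Basis W (RatFunc ℚ) H)
  (hone : T 1 = 1)
  (hmul : ∀ w w' : W, cs.length (w * w') = cs.length w + cs.length w' →
      T w * T w' = T (w * w'))
  (hquad : ∀ i : B, (T (cs.simple i) + 1) *
      (T (cs.simple i) - algebraMap (RatFunc ℚ) H RatFunc.X) = 0)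

include hmul hquad

lemma T_sq (i : B) :
    T (s i) * T (s i) = 𝕢 • T (s i) - T (s i) + 𝕢 • (1 : H) := by
  have hcomm : T (s i) * algebraMap (RatFunc ℚ) H 𝕢 = 𝕢 • T (s i) := by
    rw [← Algebra.commutes, ← Algebra.smul_def]
  have hsm : algebraMap (RatFunc ℚ) H 𝕢 = 𝕢 • (1 : H) := by
    rw [Algebra.smul_def, mul_one]
  have hexp : T (s i) * T (s i) - 𝕢 • T (s i) + (T (s i) - 𝕢 • (1 : H)) = 0 := by
    rw [← hquad i, ← hcomm, ← hsm]
    noncomm_ring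
  calc T (s i) * T (s i)
      = (T (s i) * T (s i) - 𝕢 • T (s i) + (T (s i) - 𝕢 • (1 : H)))
        + (𝕢 • T (s i) - T (s i) + 𝕢 • (1 : H)) := by abel
    _ = 𝕢 • T (s i) - T (s i) + 𝕢 • (1 : H) := by rw [hexp, zero_add]

lemma T_mul_left (i : B) (x : W) :
    T (s i) * T x = if cs.IsLeftDescent x i
      then 𝕢 • T (s i * x) + (𝕢 - 1) • T x
      else T (s i * x) := by
  by_cases hd : cs.IsLeftDescent x i
  · rw [if_pos hd]
    have hc : s i * (s i * x) = x := cs.simple_mul_simple_cancel_left i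
    have hlen : ℓ (s i * x) + 1 = ℓ x := cs.isLeftDescent_iff.mp hd
    have h1 : T (s i) * T (s i * x) = T x := by
      have h0 := hmul (s i) (s i * x) (by rw [hc, cs.length_simple]; omega)
      rwa [hc] at h0
    have h2 : T (s i) * T x = (T (s i) * T (s i)) * T (s i * x) := by
      rw [mul_assoc, h1]
    rw [h2, T_sq cs T hmul hquad i, add_mul, sub_mul, smul_mul_assoc, smul_mul_assoc,
      one_mul, h1, sub_smul, one_smul]
    abel
  · rw [if_neg hd]
    refine hmul (s i) x ?_
    have h3 := cs.not_isLeftDescent_iff.mp hd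
    rw [cs.length_simple, h3]
    omega

lemma T_mul_right (i : B) (x : W) :
    T x * T (s i) = if cs.IsRightDescent x i
      then 𝕢 • T (x * s i) + (𝕢 - 1) • T x
      else T (x * s i) := by
  by_cases hd : cs.IsRightDescent x i
  · rw [if_pos hd]
    have hc : x * s i * s i = x := cs.simple_mul_simple_cancel_right i
    have hlen : ℓ (x * s i) + 1 = ℓ x := cs.isRightDescent_iff.mp hd
    have h1 : T (x * s i) * T (s i) = T x := by
      have h0 := hmul (x * s i) (s i) (by rw [hc, cs.length_simple]; omega)
      rwa [hc] at h0
    have h2 : T x * T (s i) = T (x * s i) * (T (s i) * T (s i)) := by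
      rw [← mul_assoc, h1]
    rw [h2, T_sq cs T hmul hquad i, mul_add, mul_sub, mul_smul_comm, mul_smul_comm,
      mul_one, h1, sub_smul, one_smul]
    abel
  · rw [if_neg hd]
    refine hmul x (s i) ?_
    have h3 := cs.not_isRightDescent_iff.mp hd
    rw [cs.length_simple, h3]

lemma repr_key_left (i : B) (y z : W) :
    T.repr (T (s i) * T z) y =
      if cs.IsLeftDescent y i
      then (𝕢 - 1) * (if z = y then 1 else 0) + (if z = s i * y then 1 else 0)
      else 𝕢 * (if z = s i * y then 1 else 0) := by
  classical
  rw [T_mul_left cs T hmul hquad i z]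
  by_cases hdz : cs.IsLeftDescent z i <;> by_cases hdy : cs.IsLeftDescent y i
  · have hne : ¬ (s i * z = y) := fun hh => ((descent_flip cs hh).mp hdz) hdy
    have hne2 : ¬ (z = s i * y) := fun hh => hne ((simple_mul_eq_iff cs i z y).mpr hh)
    rw [if_pos hdz, if_pos hdy, map_add, map_smul, map_smul, Finsupp.add_apply,
      Finsupp.smul_apply, Finsupp.smul_apply, Module.Basis.repr_self, Module.Basis.repr_self,
      Finsupp.single_apply, Finsupp.single_apply, if_neg hne, if_neg hne2,
      smul_eq_mul, smul_eq_mul, mul_zero, zero_add, add_zero]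
  · have hzy : z ≠ y := fun hh => hdy (hh ▸ hdz)
    rw [if_pos hdz, if_neg hdy, map_add, map_smul, map_smul, Finsupp.add_apply,
      Finsupp.smul_apply, Finsupp.smul_apply, Module.Basis.repr_self, Module.Basis.repr_self,
      Finsupp.single_apply, Finsupp.single_apply, if_neg (fun hh : z = y => hzy hh),
      smul_eq_mul, smul_eq_mul, mul_zero, add_zero]
    rw [show (s i * z = y) ↔ (z = s i * y) from simple_mul_eq_iff cs i z y]
  · have hzy : z ≠ y := fun hh => hdz (hh ▸ hdy)
    rw [if_neg hdz, if_pos hdy, Module.Basis.repr_self, Finsupp.single_apply]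
    rw [show (s i * z = y) ↔ (z = s i * y) from simple_mul_eq_iff cs i z y,
      if_neg (fun hh : z = y => hzy hh), mul_zero, zero_add]
  · have hne : ¬ (s i * z = y) := fun hh => hdz ((descent_flip cs hh).mpr hdy)
    have hne2 : ¬ (z = s i * y) := fun hh => hne ((simple_mul_eq_iff cs i z y).mpr hh)
    rw [if_neg hdz, if_neg hdy, Module.Basis.repr_self, Finsupp.single_apply,
      if_neg hne, if_neg hne2, mul_zero]

lemma repr_key_right (i : B) (y z : W) :
    T.repr (T z * T (s i)) y =
      if cs.IsRightDescent y i
      then (𝕢 - 1) * (if z = y then 1 else 0) + (if z = y * s i then 1 else 0)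
      else 𝕢 * (if z = y * s i then 1 else 0) := by
  classical
  rw [T_mul_right cs T hmul hquad i z]
  by_cases hdz : cs.IsRightDescent z i <;> by_cases hdy : cs.IsRightDescent y i
  · have hne : ¬ (z * s i = y) := fun hh => ((descent_flip_right cs hh).mp hdz) hdy
    have hne2 : ¬ (z = y * s i) := fun hh => hne ((mul_simple_eq_iff cs i z y).mpr hh)
    rw [if_pos hdz, if_pos hdy, map_add, map_smul, map_smul, Finsupp.add_apply,
      Finsupp.smul_apply, Finsupp.smul_apply, Module.Basis.repr_self, Module.Basis.repr_self,
      Finsupp.single_apply, Finsupp.single_apply, if_neg hne, if_neg hne2,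
      smul_eq_mul, smul_eq_mul, mul_zero, zero_add, add_zero]
  · have hzy : z ≠ y := fun hh => hdy (hh ▸ hdz)
    rw [if_pos hdz, if_neg hdy, map_add, map_smul, map_smul, Finsupp.add_apply,
      Finsupp.smul_apply, Finsupp.smul_apply, Module.Basis.repr_self, Module.Basis.repr_self,
      Finsupp.single_apply, Finsupp.single_apply, if_neg (fun hh : z = y => hzy hh),
      smul_eq_mul, smul_eq_mul, mul_zero, add_zero]
    rw [show (z * s i = y) ↔ (z = y * s i) from mul_simple_eq_iff cs i z y]
  · have hzy : z ≠ y := fun hh => hdz (hh ▸ hdy)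
    rw [if_neg hdz, if_pos hdy, Module.Basis.repr_self, Finsupp.single_apply]
    rw [show (z * s i = y) ↔ (z = y * s i) from mul_simple_eq_iff cs i z y,
      if_neg (fun hh : z = y => hzy hh), mul_zero, zero_add]
  · have hne : ¬ (z * s i = y) := fun hh => hdz ((descent_flip_right cs hh).mpr hdy)
    have hne2 : ¬ (z = y * s i) := fun hh => hne ((mul_simple_eq_iff cs i z y).mpr hh)
    rw [if_neg hdz, if_neg hdy, Module.Basis.repr_self, Finsupp.single_apply,
      if_neg hne, if_neg hne2, mul_zero]

lemma repr_left (i : B) (y : W) (h : H) :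
    T.repr (T (s i) * h) y =
      if cs.IsLeftDescent y i
      then (𝕢 - 1) * T.repr h y + T.repr h (s i * y)
      else 𝕢 * T.repr h (s i * y) := by
  classical
  have hsy : s i * y ≠ y := fun hh => (cs.length_simple_mul_ne y i) (by rw [hh])
  have expand : T (s i) * h = ∑ z : W, T.repr h z • (T (s i) * T z) := by
    conv_lhs => rw [← T.sum_repr h]
    rw [Finset.mul_sum]
    exact Finset.sum_congr rfl fun z _ => mul_smul_comm _ _ _
  rw [expand, map_sum, Finsupp.finset_sum_apply]
  simp only [map_smul, Finsupp.smul_apply, smul_eq_mul,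
    repr_key_left cs T hmul hquad i y]
  by_cases hdy : cs.IsLeftDescent y i
  · simp only [if_pos hdy]
    have pointwise : ∀ z : W,
        T.repr h z * ((𝕢 - 1) * (if z = y then 1 else 0) + (if z = s i * y then 1 else 0))
        = (if z = y then (𝕢 - 1) * T.repr h z else 0)
          + (if z = s i * y then T.repr h z else 0) := by
      intro z
      by_cases h1 : z = y
      · have h2 : ¬ (z = s i * y) := by rw [h1]; exact fun hh => hsy hh.symm
        simp [h1, h2, mul_comm, simple_ne_one_aux cs i]
      · by_cases h2 : z = s i * y
        · simp [h1, h2, simple_ne_one_aux cs i]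
        · simp [h1, h2]
    simp only [pointwise]
    rw [Finset.sum_add_distrib, Finset.sum_ite_eq' Finset.univ y,
      Finset.sum_ite_eq' Finset.univ (s i * y)]
    simp
  · simp only [if_neg hdy]
    have pointwise : ∀ z : W,
        T.repr h z * (𝕢 * (if z = s i * y then 1 else 0))
        = (if z = s i * y then 𝕢 * T.repr h z else 0) := by
      intro z
      by_cases h2 : z = s i * y <;> simp [h2, mul_comm]
    simp only [pointwise]
    rw [Finset.sum_ite_eq' Finset.univ (s i * y)]
    simp

lemma repr_right (i : B) (y : W) (h : H) :
    T.repr (h * T (s i)) y =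
      if cs.IsRightDescent y i
      then (𝕢 - 1) * T.repr h y + T.repr h (y * s i)
      else 𝕢 * T.repr h (y * s i) := by
  classical
  have hsy : y * s i ≠ y := fun hh => (cs.length_mul_simple_ne y i) (by rw [hh])
  have expand : h * T (s i) = ∑ z : W, T.repr h z • (T z * T (s i)) := by
    conv_lhs => rw [← T.sum_repr h]
    rw [Finset.sum_mul]
    exact Finset.sum_congr rfl fun z _ => smul_mul_assoc _ _ _
  rw [expand, map_sum, Finsupp.finset_sum_apply]
  simp only [map_smul, Finsupp.smul_apply, smul_eq_mul,
    repr_key_right cs T hmul hquad i y]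
  by_cases hdy : cs.IsRightDescent y i
  · simp only [if_pos hdy]
    have pointwise : ∀ z : W,
        T.repr h z * ((𝕢 - 1) * (if z = y then 1 else 0) + (if z = y * s i then 1 else 0))
        = (if z = y then (𝕢 - 1) * T.repr h z else 0)
          + (if z = y * s i then T.repr h z else 0) := by
      intro z
      by_cases h1 : z = y
      · have h2 : ¬ (z = y * s i) := by rw [h1]; exact fun hh => hsy hh.symm
        simp [h1, h2, mul_comm, simple_ne_one_aux cs i]
      · by_cases h2 : z = y * s i
        · simp [h1, h2, simple_ne_one_aux cs i]
        · simp [h1, h2]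
    simp only [pointwise]
    rw [Finset.sum_add_distrib, Finset.sum_ite_eq' Finset.univ y,
      Finset.sum_ite_eq' Finset.univ (y * s i)]
    simp
  · simp only [if_neg hdy]
    have pointwise : ∀ z : W,
        T.repr h z * (𝕢 * (if z = y * s i then 1 else 0))
        = (if z = y * s i then 𝕢 * T.repr h z else 0) := by
      intro z
      by_cases h2 : z = y * s i <;> simp [h2, mul_comm]
    simp only [pointwise]
    rw [Finset.sum_ite_eq' Finset.univ (y * s i)]
    simp

/-- The invariant: coefficients of `h` in the basis `T` are polynomials with controlled
degrees, and the top diagonal coefficient is `b`. -/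
def InvP (m : ℕ) (x : W) (b : ℚ) (h : H) : Prop :=
  ∀ y : W, ∃ P : Polynomial ℚ,
    algebraMap (Polynomial ℚ) (RatFunc ℚ) P = T.repr h y ∧
    (∀ k : ℕ, m + ℓ x < k + ℓ y → P.coeff k = 0) ∧
    (ℓ y < ℓ x → ∀ k : ℕ, m + ℓ x ≤ k + ℓ y → P.coeff k = 0) ∧
    (y = x → P.coeff m = b)

omit hone hmul hquad in
lemma invp_base (x : W) : InvP cs T 0 x 1 (T x) := by
  intro y
  by_cases hxy : y = x
  · subst hxy
    refine ⟨1, ?_, ?_, ?_, ?_⟩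
    · simp [Module.Basis.repr_self]
    · intro k hk
      have hk0 : k ≠ 0 := by omega
      simp [Polynomial.coeff_one, hk0]
    · intro hlt; omega
    · intro _; simp
  · refine ⟨0, ?_, ?_, ?_, ?_⟩
    · have hne : x ≠ y := fun hh => hxy hh.symm
      simp [Module.Basis.repr_self, Finsupp.single_apply, hne]
    · intro k _; simp
    · intro _ k _; simp
    · intro hh; exact absurd hh hxy

omit hone in
lemma invp_step_left (i : B) (m : ℕ) (x : W) (b : ℚ) (h : H)
    (hinv : InvP cs T m x b h) :
    InvP cs T (m + 1) x (if cs.IsLeftDescent x i then b else 0) (T (s i) * h) := by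
  intro y
  by_cases hdy : cs.IsLeftDescent y i
  · obtain ⟨P, hP, hPw, hPs, hPt⟩ := hinv y
    obtain ⟨Q, hQ, hQw, hQs, hQt⟩ := hinv (s i * y)
    have hly : ℓ (s i * y) + 1 = ℓ y := cs.isLeftDescent_iff.mp hdy
    refine ⟨(Polynomial.X - 1) * P + Q, ?_, ?_, ?_, ?_⟩
    · rw [map_add, map_mul, map_sub, RatFunc.algebraMap_X, map_one, hP, hQ,
        repr_left cs T hmul hquad i y h, if_pos hdy]
    · intro k hk
      rw [Polynomial.coeff_add, sub_mul, one_mul, Polynomial.coeff_sub, coeff_Xmul]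
      by_cases hk0 : k = 0
      · subst hk0
        rw [if_pos rfl, hPw 0 (by omega), hQw 0 (by omega)]
        ring
      · rw [if_neg hk0, hPw (k - 1) (by omega), hPw k (by omega), hQw k (by omega)]
        ring
    · intro hlt k hk
      rw [Polynomial.coeff_add, sub_mul, one_mul, Polynomial.coeff_sub, coeff_Xmul]
      have hk0 : k ≠ 0 := by omega
      rw [if_neg hk0, hPs hlt (k - 1) (by omega), hPs hlt k (by omega),
        hQs (by omega) k (by omega)]
      ring
    · intro hyx
      subst hyx
      rw [if_pos hdy, Polynomial.coeff_add, sub_mul, one_mul, Polynomial.coeff_sub,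
        coeff_Xmul, if_neg (by omega : ¬ (m + 1 = 0)), Nat.add_sub_cancel,
        hPt rfl, hPw (m + 1) (by omega), hQs (by omega) (m + 1) (by omega)]
      ring
  · obtain ⟨Q, hQ, hQw, hQs, hQt⟩ := hinv (s i * y)
    have hly : ℓ (s i * y) = ℓ y + 1 := cs.not_isLeftDescent_iff.mp hdy
    refine ⟨Polynomial.X * Q, ?_, ?_, ?_, ?_⟩
    · rw [map_mul, RatFunc.algebraMap_X, hQ, repr_left cs T hmul hquad i y h, if_neg hdy]
    · intro k hk
      rw [coeff_Xmul]
      by_cases hk0 : k = 0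
      · rw [if_pos hk0]
      · rw [if_neg hk0, hQw (k - 1) (by omega)]
    · intro hlt k hk
      rw [coeff_Xmul]
      by_cases hk0 : k = 0
      · rw [if_pos hk0]
      · rw [if_neg hk0, hQw (k - 1) (by omega)]
    · intro hyx
      subst hyx
      rw [if_neg hdy, coeff_Xmul, if_neg (by omega : ¬ (m + 1 = 0)), Nat.add_sub_cancel,
        hQw m (by omega)]

omit hone in
lemma invp_step_right (i : B) (m : ℕ) (x : W) (b : ℚ) (h : H)
    (hinv : InvP cs T m x b h) :
    InvP cs T (m + 1) x (if cs.IsRightDescent x i then b else 0) (h * T (s i)) := by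
  intro y
  by_cases hdy : cs.IsRightDescent y i
  · obtain ⟨P, hP, hPw, hPs, hPt⟩ := hinv y
    obtain ⟨Q, hQ, hQw, hQs, hQt⟩ := hinv (y * s i)
    have hly : ℓ (y * s i) + 1 = ℓ y := cs.isRightDescent_iff.mp hdy
    refine ⟨(Polynomial.X - 1) * P + Q, ?_, ?_, ?_, ?_⟩
    · rw [map_add, map_mul, map_sub, RatFunc.algebraMap_X, map_one, hP, hQ,
        repr_right cs T hmul hquad i y h, if_pos hdy]
    · intro k hk
      rw [Polynomial.coeff_add, sub_mul, one_mul, Polynomial.coeff_sub, coeff_Xmul]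
      by_cases hk0 : k = 0
      · subst hk0
        rw [if_pos rfl, hPw 0 (by omega), hQw 0 (by omega)]
        ring
      · rw [if_neg hk0, hPw (k - 1) (by omega), hPw k (by omega), hQw k (by omega)]
        ring
    · intro hlt k hk
      rw [Polynomial.coeff_add, sub_mul, one_mul, Polynomial.coeff_sub, coeff_Xmul]
      have hk0 : k ≠ 0 := by omega
      rw [if_neg hk0, hPs hlt (k - 1) (by omega), hPs hlt k (by omega),
        hQs (by omega) k (by omega)]
      ring
    · intro hyx
      subst hyx
      rw [if_pos hdy, Polynomial.coeff_add, sub_mul, one_mul, Polynomial.coeff_sub,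
        coeff_Xmul, if_neg (by omega : ¬ (m + 1 = 0)), Nat.add_sub_cancel,
        hPt rfl, hPw (m + 1) (by omega), hQs (by omega) (m + 1) (by omega)]
      ring
  · obtain ⟨Q, hQ, hQw, hQs, hQt⟩ := hinv (y * s i)
    have hly : ℓ (y * s i) = ℓ y + 1 := cs.not_isRightDescent_iff.mp hdy
    refine ⟨Polynomial.X * Q, ?_, ?_, ?_, ?_⟩
    · rw [map_mul, RatFunc.algebraMap_X, hQ, repr_right cs T hmul hquad i y h, if_neg hdy]
    · intro k hk
      rw [coeff_Xmul]
      by_cases hk0 : k = 0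
      · rw [if_pos hk0]
      · rw [if_neg hk0, hQw (k - 1) (by omega)]
    · intro hlt k hk
      rw [coeff_Xmul]
      by_cases hk0 : k = 0
      · rw [if_pos hk0]
      · rw [if_neg hk0, hQw (k - 1) (by omega)]
    · intro hyx
      subst hyx
      rw [if_neg hdy, coeff_Xmul, if_neg (by omega : ¬ (m + 1 = 0)), Nat.add_sub_cancel,
        hQw m (by omega)]

include hone in
lemma invp_word_left (ω : List B) (hω : cs.IsReduced ω) (m : ℕ) (x : W) (b : ℚ) (h : H)
    (hinv : InvP cs T m x b h) :
    InvP cs T (m + ω.length) x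
      (if ∀ i ∈ ω, cs.IsLeftDescent x i then b else 0) (T (π ω) * h) := by
  induction ω generalizing m b h with
  | nil =>
      simpa [cs.wordProd_nil, hone] using hinv
  | cons i ω ih =>
      have hω' : cs.IsReduced ω := by
        have h1 := CoxeterSystem.IsReduced.drop (ω := i :: ω) hω (j := 1)
        simpa using h1
      have hsplit : T (π (i :: ω)) = T (s i) * T (π ω) := by
        rw [cs.wordProd_cons]
        refine (hmul (s i) (π ω) ?_).symm
        have h1 : ℓ (π (i :: ω)) = (i :: ω).length := hω
        have h2 : ℓ (π ω) = ω.length := hω'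
        rw [← cs.wordProd_cons, h1, cs.length_simple, h2]
        simp only [List.length_cons]
        omega
      rw [hsplit, mul_assoc]
      have step := invp_step_left cs T hmul hquad i (m + ω.length) x _ _
        (ih hω' m b h hinv)
      have hb : (if cs.IsLeftDescent x i then
            (if ∀ j ∈ ω, cs.IsLeftDescent x j then b else 0) else 0)
          = (if ∀ j ∈ (i :: ω), cs.IsLeftDescent x j then b else 0) := by
        by_cases h1 : cs.IsLeftDescent x i <;>
          by_cases h2 : ∀ j ∈ ω, cs.IsLeftDescent x j <;>
          simp [h1, h2, List.forall_mem_cons]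
      have hm : m + ω.length + 1 = m + (i :: ω).length := by
        simp [List.length_cons]
        omega
      rw [← hb, ← hm]
      exact step

include hone in
lemma invp_word_right (ω : List B) (hω : cs.IsReduced ω) (m : ℕ) (x : W) (b : ℚ) (h : H)
    (hinv : InvP cs T m x b h) :
    InvP cs T (m + ω.length) x
      (if ∀ j ∈ ω, cs.IsRightDescent x j then b else 0) (h * T (π ω)) := by
  induction ω generalizing m b h with
  | nil =>
      simpa [cs.wordProd_nil, hone] using hinv
  | cons i ω ih =>
      have hω' : cs.IsReduced ω := by
        have h1 := CoxeterSystem.IsReduced.drop (ω := i :: ω) hω (j := 1)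
        simpa using h1
      have hsplit : T (π (i :: ω)) = T (s i) * T (π ω) := by
        rw [cs.wordProd_cons]
        refine (hmul (s i) (π ω) ?_).symm
        have h1 : ℓ (π (i :: ω)) = (i :: ω).length := hω
        have h2 : ℓ (π ω) = ω.length := hω'
        rw [← cs.wordProd_cons, h1, cs.length_simple, h2]
        simp only [List.length_cons]
        omega
      have hassoc : h * T (π (i :: ω)) = (h * T (s i)) * T (π ω) := by
        rw [hsplit, mul_assoc]
      rw [hassoc]
      have step := invp_step_right cs T hmul hquad i m x b h hinv
      have final := ih hω' (m + 1) _ _ step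
      have hb : (if ∀ j ∈ ω, cs.IsRightDescent x j then
            (if cs.IsRightDescent x i then b else 0) else 0)
          = (if ∀ j ∈ (i :: ω), cs.IsRightDescent x j then b else 0) := by
        by_cases h1 : cs.IsRightDescent x i <;>
          by_cases h2 : ∀ j ∈ ω, cs.IsRightDescent x j <;>
          simp [h1, h2, List.forall_mem_cons]
      have hm : m + 1 + ω.length = m + (i :: ω).length := by
        simp [List.length_cons]
        omega
      rw [← hb, ← hm]
      exact final

include hone in
lemma diag_coeff (ωl ωr : List B) (hl : cs.IsReduced ωl) (hr : cs.IsReduced ωr) (x : W) :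
    ∃ P : Polynomial ℚ,
      algebraMap (Polynomial ℚ) (RatFunc ℚ) P = T.repr (T (π ωl) * (T x * T (π ωr))) x ∧
      (∀ k : ℕ, ωl.length + ωr.length < k → P.coeff k = 0) ∧
      P.coeff (ωl.length + ωr.length) =
        (if (∀ i ∈ ωl, cs.IsLeftDescent x i) ∧ (∀ j ∈ ωr, cs.IsRightDescent x j)
         then 1 else 0) := by
  have h0 := invp_base cs T x
  have h1 := invp_word_right cs T hone hmul hquad ωr hr 0 x 1 (T x) h0
  have h2 := invp_word_left cs T hone hmul hquad ωl hl (0 + ωr.length) x _ _ h1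
  obtain ⟨P, hP, hPw, _, hPt⟩ := h2 x
  refine ⟨P, hP, ?_, ?_⟩
  · intro k hk
    exact hPw k (by omega)
  · have htop := hPt rfl
    have hidx : 0 + ωr.length + ωl.length = ωl.length + ωr.length := by omega
    rw [hidx] at htop
    rw [htop]
    split_ifs <;> tauto

end Hecke
end CoxAux

/-- The support of `w`: the set of simple-reflection indices appearing in some
(equivalently, any) reduced word for `w`. -/
def CoxeterSystem.support {B W : Type} [Group W] {M : CoxeterMatrix B}
    (cs : CoxeterSystem M W) (w : W) : Set B :=
  {i | ∃ l : List B, cs.IsReduced l ∧ cs.wordProd l = w ∧ i ∈ l}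

/-- if the support of `w` (or of `w'`) is all of `S`, then the coefficient
of `q^n` (`n = ℓ(w) + ℓ(w')`) in `N^{w,w'}`, the trace of `h ↦ T_w h T_{w'⁻¹}`, equals 1. -/
theorem hecke_trace_leading_coeff_eq_one_of_full_support
    {B W : Type} [Group W] [Fintype W] {M : CoxeterMatrix B} (cs : CoxeterSystem M W)
    (H : Type) [Ring H] [Algebra (RatFunc ℚ) H]
    (T : Module.Basis W (RatFunc ℚ) H)
    (hone : T 1 = 1)
    (hmul : ∀ w w' : W, cs.length (w * w') = cs.length w + cs.length w' →
      T w * T w' = T (w * w'))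
    (hquad : ∀ i : B, (T (cs.simple i) + 1) *
      (T (cs.simple i) - algebraMap (RatFunc ℚ) H RatFunc.X) = 0)
    (w w' : W) (n : ℕ) (hn : n = cs.length w + cs.length w')
    (hfull : cs.support w = Set.univ ∨ cs.support w' = Set.univ)
    (N : Polynomial ℚ)
    (hN : algebraMap (Polynomial ℚ) (RatFunc ℚ) N =
      LinearMap.trace (RatFunc ℚ) H
        ((LinearMap.mulLeft (RatFunc ℚ) (T w)).comp
          (LinearMap.mulRight (RatFunc ℚ) (T w'⁻¹)))) :
    N.coeff n = 1 := by
  classical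
  obtain ⟨x₀, hx₀L, hx₀R⟩ := CoxAux.exists_all_descents cs
  obtain ⟨ωl, hl, hwl⟩ := cs.exists_reduced_word' w
  obtain ⟨ζ, hζ, hwζ⟩ := cs.exists_reduced_word' w'
  have hr : cs.IsReduced ζ.reverse := (cs.isReduced_reverse_iff ζ).mpr hζ
  have hπr : cs.wordProd ζ.reverse = w'⁻¹ := by
    rw [cs.wordProd_reverse, ← hwζ]
  have hlenl : ωl.length = cs.length w := by rw [hwl]; exact hl.symm
  have hlenr : ζ.reverse.length = cs.length w' := by
    rw [List.length_reverse, hwζ]; exact hζ.symm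
  have hn' : n = ωl.length + ζ.reverse.length := by omega
  have hdiag := fun x => CoxAux.diag_coeff cs T hone hmul hquad ωl ζ.reverse hl hr x
  choose P hP1 hP2 hP3 using hdiag
  -- trace is the sum of diagonal entries
  have htr : algebraMap (Polynomial ℚ) (RatFunc ℚ) N
      = ∑ x : W, T.repr (T w * (T x * T w'⁻¹)) x := by
    rw [hN, LinearMap.trace_eq_matrix_trace (RatFunc ℚ) T, Matrix.trace]
    apply Finset.sum_congr rfl
    intro x _
    rw [Matrix.diag_apply, LinearMap.toMatrix_apply', LinearMap.comp_apply,
      LinearMap.mulRight_apply, LinearMap.mulLeft_apply]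
  have hsum : algebraMap (Polynomial ℚ) (RatFunc ℚ) N
      = algebraMap (Polynomial ℚ) (RatFunc ℚ) (∑ x : W, P x) := by
    rw [htr, map_sum]
    refine Finset.sum_congr rfl fun x _ => ?_
    rw [hP1 x, ← hwl, hπr]
  have hNP : N = ∑ x : W, P x := RatFunc.algebraMap_injective ℚ hsum
  -- each diagonal coefficient is the indicator of x = x₀
  have hcoeff : ∀ x : W, (P x).coeff n = if x = x₀ then (1 : ℚ) else 0 := by
    intro x
    rw [hn', hP3 x]
    by_cases hx : x = x₀
    · subst hx
      rw [if_pos ⟨fun i _ => hx₀L i, fun j _ => hx₀R j⟩, if_pos rfl]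
    · rw [if_neg ?_, if_neg hx]
      rintro ⟨hCl, hCr⟩
      apply hx
      rcases hfull with hsup | hsup
      · -- the support of w is everything: x has all left descents
        refine CoxAux.all_leftDescent_unique cs (fun i => ?_) hx₀L
        have hi : i ∈ cs.support w := by rw [hsup]; trivial
        obtain ⟨l, hlred, hlw, hil⟩ := hi
        obtain ⟨P', hP'1, _, hP'3⟩ :=
          CoxAux.diag_coeff cs T hone hmul hquad l ζ.reverse hlred hr x
        have hll : l.length = ωl.length := by
          have e1 : cs.length (cs.wordProd l) = l.length := hlred
          rw [hlw] at e1
          omega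
        have hPeq : P x = P' := by
          apply RatFunc.algebraMap_injective ℚ
          rw [hP1 x, hP'1, hlw, ← hwl]
        rw [← hPeq, hll] at hP'3
        rw [hP3 x, if_pos ⟨hCl, hCr⟩] at hP'3
        have hcond : (∀ i ∈ l, cs.IsLeftDescent x i) ∧
            (∀ j ∈ ζ.reverse, cs.IsRightDescent x j) := by
          by_contra hc
          rw [if_neg hc] at hP'3
          exact one_ne_zero hP'3
        exact hcond.1 i hil
      · -- the support of w' is everything: x has all right descents
        refine CoxAux.all_rightDescent_unique cs (fun j => ?_) hx₀R
        have hj : j ∈ cs.support w' := by rw [hsup]; trivial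
        obtain ⟨l, hlred, hlw, hjl⟩ := hj
        have hlr : cs.IsReduced l.reverse := (cs.isReduced_reverse_iff l).mpr hlred
        have hπl : cs.wordProd l.reverse = w'⁻¹ := by rw [cs.wordProd_reverse, hlw]
        obtain ⟨P', hP'1, _, hP'3⟩ :=
          CoxAux.diag_coeff cs T hone hmul hquad ωl l.reverse hl hlr x
        have hll : l.reverse.length = ζ.reverse.length := by
          have e1 : cs.length (cs.wordProd l) = l.length := hlred
          rw [hlw] at e1
          rw [List.length_reverse]
          omega
        have hPeq : P x = P' := by
          apply RatFunc.algebraMap_injective ℚ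
          rw [hP1 x, hP'1, hπl, hπr]
        rw [← hPeq, hll] at hP'3
        rw [hP3 x, if_pos ⟨hCl, hCr⟩] at hP'3
        have hcond : (∀ i ∈ ωl, cs.IsLeftDescent x i) ∧
            (∀ j' ∈ l.reverse, cs.IsRightDescent x j') := by
          by_contra hc
          rw [if_neg hc] at hP'3
          exact one_ne_zero hP'3
        exact hcond.2 j (List.mem_reverse.mpr hjl)
  rw [hNP, Polynomial.finset_sum_coeff]
  calc ∑ x : W, (P x).coeff n = ∑ x : W, (if x = x₀ then (1 : ℚ) else 0) :=
        Finset.sum_congr rfl fun x _ => hcoeff x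
    _ = 1 := by rw [Finset.sum_ite_eq' Finset.univ x₀]; simp
end

section
/- For w, w' in a Weyl group W with n = ℓ(w)+ℓ(w'), the polynomial N^{w,w'} satisfies the functional equation N^{w,w'}(q) = (−q)^n · N^{w,w'}(q^{-1}) (i.e., for 0 ≤ i ≤ n, the coefficient of q^i equals (−1)^n times the coefficient of q^{n−i}). -/
open Polynomial

set_option maxHeartbeats 1000000

section Aux

/-- Injectivity of evaluation of rational polynomials at `X⁻¹` in `RatFunc ℚ`. -/
lemma aux_aeval_Xinv_injective :
    Function.Injective ((Polynomial.aeval ((RatFunc.X : RatFunc ℚ)⁻¹)).toRingHom :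
      ℚ[X] →+* RatFunc ℚ) := by
  rw [injective_iff_map_eq_zero]
  intro p hp
  have hXne : (RatFunc.X : RatFunc ℚ) ≠ 0 := RatFunc.X_ne_zero
  have hXinv_ne : ((RatFunc.X : RatFunc ℚ))⁻¹ ≠ 0 := inv_ne_zero hXne
  letI : Invertible ((RatFunc.X : RatFunc ℚ))⁻¹ := invertibleOfNonzero hXinv_ne
  have hp' : Polynomial.eval₂ (algebraMap ℚ (RatFunc ℚ)) ((RatFunc.X : RatFunc ℚ))⁻¹ p = 0 := by
    simpa [Polynomial.aeval_def] using hp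
  have h0 : Polynomial.eval₂ (algebraMap ℚ (RatFunc ℚ)) (⅟((RatFunc.X : RatFunc ℚ))⁻¹)
      (Polynomial.reverse p) = 0 :=
    (Polynomial.eval₂_reverse_eq_zero_iff (algebraMap ℚ (RatFunc ℚ))
      ((RatFunc.X : RatFunc ℚ))⁻¹ p).mpr hp'
  have hinvof : (⅟((RatFunc.X : RatFunc ℚ))⁻¹) = RatFunc.X := by
    rw [invOf_eq_inv, inv_inv]
  rw [hinvof] at h0
  have h1 : Polynomial.aeval (RatFunc.X : RatFunc ℚ) (Polynomial.reverse p)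
      = algebraMap ℚ[X] (RatFunc ℚ) (Polynomial.reverse p) := by
    have h := Polynomial.aeval_algHom_apply (IsScalarTower.toAlgHom ℚ ℚ[X] (RatFunc ℚ))
      Polynomial.X (Polynomial.reverse p)
    simpa [Polynomial.aeval_X_left_apply, RatFunc.algebraMap_X] using h
  have h2 : algebraMap ℚ[X] (RatFunc ℚ) (Polynomial.reverse p) = 0 := by
    rw [← h1, Polynomial.aeval_def, h0]
  have h3 : Polynomial.reverse p = 0 := by
    apply RatFunc.algebraMap_injective
    simpa using h2
  exact Polynomial.reverse_eq_zero.mp h3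

/-- Injectivity of `P ↦ P(X²)` from `ℚ[X]` to `RatFunc ℚ`. -/
lemma aux_aeval_Xsq_injective (P : ℚ[X])
    (hP : Polynomial.aeval ((RatFunc.X : RatFunc ℚ) ^ 2) P = 0) : P = 0 := by
  have h1 : Polynomial.aeval ((RatFunc.X : RatFunc ℚ) ^ 2) P
      = algebraMap ℚ[X] (RatFunc ℚ) (Polynomial.aeval ((Polynomial.X : ℚ[X]) ^ 2) P) := by
    have h := Polynomial.aeval_algHom_apply (IsScalarTower.toAlgHom ℚ ℚ[X] (RatFunc ℚ))
      ((Polynomial.X : ℚ[X]) ^ 2) P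
    simpa [RatFunc.algebraMap_X, map_pow] using h
  have h2 : Polynomial.aeval ((Polynomial.X : ℚ[X]) ^ 2) P = 0 := by
    apply RatFunc.algebraMap_injective
    rw [← h1, hP]
    simp
  have h3 : P.comp ((Polynomial.X : ℚ[X]) ^ 2) = 0 := by
    rw [Polynomial.comp, ← Polynomial.algebraMap_eq, ← Polynomial.aeval_def, h2]
  rcases Polynomial.comp_eq_zero_iff.mp h3 with h | ⟨_, h⟩
  · exact h
  · exfalso
    have : ((Polynomial.X : ℚ[X]) ^ 2).coeff 0 = 0 := by simp
    rw [this, map_zero] at h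
    exact pow_ne_zero 2 Polynomial.X_ne_zero h

end Aux

/-- the polynomial `N^{w,w'} ∈ ℤ[q]` (trace of `h ↦ T_w h T_{w'⁻¹}` on the
Iwahori–Hecke algebra over `ℚ(v)`, `q = v²`) satisfies `N^{w,w'}(q) = (−q)ⁿ N^{w,w'}(q⁻¹)`
with `n = ℓ(w) + ℓ(w')`; i.e. for `0 ≤ i ≤ n` the coefficient of `q^i` equals `(−1)ⁿ`
times the coefficient of `q^{n−i}`. -/
theorem hecke_trace_functional_equation
    {B W : Type} [Group W] [Fintype W] {M : CoxeterMatrix B} (cs : CoxeterSystem M W)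
    (H : Type) [Ring H] [Algebra (RatFunc ℚ) H]
    (T : Module.Basis W (RatFunc ℚ) H)
    (hone : T 1 = 1)
    (hmul : ∀ w w' : W, cs.length (w * w') = cs.length w + cs.length w' →
      T w * T w' = T (w * w'))
    (hquad : ∀ i : B, (T (cs.simple i) + 1) *
      (T (cs.simple i) - algebraMap (RatFunc ℚ) H (RatFunc.X ^ 2)) = 0)
    (w w' : W) (n : ℕ) (hn : n = cs.length w + cs.length w')
    (N : Polynomial ℚ)
    (hN : Polynomial.aeval ((RatFunc.X : RatFunc ℚ) ^ 2) N =
      LinearMap.trace (RatFunc ℚ) H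
        ((LinearMap.mulLeft (RatFunc ℚ) (T w)).comp
          (LinearMap.mulRight (RatFunc ℚ) (T w'⁻¹)))) :
    ∀ i : ℕ, i ≤ n → N.coeff i = (-1) ^ n * N.coeff (n - i) := by
  classical
  set q : RatFunc ℚ := RatFunc.X ^ 2 with hqdef
  have hq0 : q ≠ 0 := pow_ne_zero _ RatFunc.X_ne_zero
  have hvne : (-q : RatFunc ℚ) ≠ 0 := neg_ne_zero.mpr hq0
  -- the bar involution `σ : v ↦ v⁻¹` of `ℚ(v)`
  obtain ⟨σ, hσX⟩ : ∃ σ : RatFunc ℚ →+* RatFunc ℚ, σ RatFunc.X = (RatFunc.X)⁻¹ := by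
    refine ⟨IsFractionRing.lift aux_aeval_Xinv_injective, ?_⟩
    have h := IsFractionRing.lift_algebraMap (A := ℚ[X]) (K := RatFunc ℚ)
      aux_aeval_Xinv_injective (Polynomial.X : ℚ[X])
    simpa [RatFunc.algebraMap_X] using h
  have hσq : σ q = q⁻¹ := by
    rw [hqdef, map_pow, hσX, inv_pow]
  -- quadratic relation in convenient form
  have hsq : ∀ i : B, T (cs.simple i) * T (cs.simple i)
      = q • T (cs.simple i) - T (cs.simple i) + q • (1 : H) := by
    intro i
    have h := hquad i
    rw [add_mul, one_mul, mul_sub] at h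
    have h3 : T (cs.simple i) * T (cs.simple i)
        = T (cs.simple i) * algebraMap (RatFunc ℚ) H q - T (cs.simple i)
          + algebraMap (RatFunc ℚ) H q := by
      apply eq_of_sub_eq_zero
      calc T (cs.simple i) * T (cs.simple i)
          - (T (cs.simple i) * algebraMap (RatFunc ℚ) H q - T (cs.simple i)
            + algebraMap (RatFunc ℚ) H q)
          = T (cs.simple i) * T (cs.simple i) - T (cs.simple i) * algebraMap (RatFunc ℚ) H q
            + (T (cs.simple i) - algebraMap (RatFunc ℚ) H q) := by abel
        _ = 0 := h
    rw [h3, ← Algebra.commutes q (T (cs.simple i)), ← Algebra.smul_def,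
      Algebra.algebraMap_eq_smul_one]
  -- expanding a product in the basis
  have repr_mul_left : ∀ (a h : H) (x : W),
      T.repr (a * h) x = ∑ z : W, T.repr h z * T.repr (a * T z) x := by
    intro a h x
    conv_lhs => rw [← T.sum_repr h, Finset.mul_sum]
    rw [map_sum, Finset.sum_apply']
    refine Finset.sum_congr rfl fun z _ => ?_
    rw [mul_smul_comm, map_smul, Finsupp.smul_apply, smul_eq_mul]
  have repr_mul_right : ∀ (a h : H) (x : W),
      T.repr (h * a) x = ∑ z : W, T.repr h z * T.repr (T z * a) x := by
    intro a h x
    conv_lhs => rw [← T.sum_repr h, Finset.sum_mul]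
    rw [map_sum, Finset.sum_apply']
    refine Finset.sum_congr rfl fun z _ => ?_
    rw [smul_mul_assoc, map_smul, Finsupp.smul_apply, smul_eq_mul]
  -- one-step lemma, left multiplication by a simple reflection
  have stepL : ∀ (i : B) (z x : W),
      (-q) ^ (cs.length z + 1) * σ (T.repr (T (cs.simple i) * T z) x)
        = (-q) ^ (cs.length x) * T.repr (T (cs.simple i) * T z) x := by
    intro i z x
    rcases cs.length_simple_mul z i with hasc | hdesc
    · have hTm : T (cs.simple i) * T z = T (cs.simple i * z) :=
        hmul _ _ (by rw [cs.length_simple]; omega)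
      rw [hTm, T.repr_self, Finsupp.single_apply]
      by_cases hx : cs.simple i * z = x
      · rw [if_pos hx, map_one, mul_one, mul_one, ← hx, hasc]
      · rw [if_neg hx, map_zero, mul_zero, mul_zero]
    · set z' := cs.simple i * z with hz'
      have hzz : cs.simple i * z' = z := cs.simple_mul_simple_cancel_left i
      have hlen : cs.length z' + 1 = cs.length z := hdesc
      have hTz : T (cs.simple i) * T z' = T z := by
        rw [hmul _ _ (by rw [hzz, cs.length_simple]; omega), hzz]
      have hmulsz : T (cs.simple i) * T z = q • T z - T z + q • T z' := by
        calc T (cs.simple i) * T z = (T (cs.simple i) * T (cs.simple i)) * T z' := by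
              rw [mul_assoc, hTz]
          _ = (q • T (cs.simple i) - T (cs.simple i) + q • (1:H)) * T z' := by rw [hsq i]
          _ = q • (T (cs.simple i) * T z') - T (cs.simple i) * T z' + q • T z' := by
              rw [add_mul, sub_mul, smul_mul_assoc, smul_mul_assoc, one_mul]
          _ = q • T z - T z + q • T z' := by rw [hTz]
      have hne : z' ≠ z := fun hcon => by rw [hcon] at hlen; omega
      rw [hmulsz]
      simp only [map_add, map_sub, map_smul, Module.Basis.repr_self, Finsupp.add_apply,
        Finsupp.sub_apply, Finsupp.smul_apply, Finsupp.single_apply, smul_eq_mul]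
      by_cases hx1 : z = x
      · have hx2 : ¬ (z' = x) := by rw [← hx1]; exact hne
        rw [if_pos hx1, if_neg hx2, ← hx1]
        simp only [map_zero, map_one, map_mul, map_sub, map_add, hσq, mul_zero, mul_one,
          add_zero, sub_zero, zero_add]
        rw [pow_succ]
        field_simp
        ring
      · by_cases hx2 : z' = x
        · rw [if_neg hx1, if_pos hx2, ← hx2, ← hlen]
          simp only [map_zero, map_one, map_mul, map_sub, map_add, hσq, mul_zero, mul_one,
            add_zero, sub_zero, zero_add]
          rw [pow_succ, pow_succ]
          field_simp
        · rw [if_neg hx1, if_neg hx2]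
          simp
  -- one-step lemma, right multiplication by a simple reflection
  have stepR : ∀ (i : B) (z x : W),
      (-q) ^ (cs.length z + 1) * σ (T.repr (T z * T (cs.simple i)) x)
        = (-q) ^ (cs.length x) * T.repr (T z * T (cs.simple i)) x := by
    intro i z x
    rcases cs.length_mul_simple z i with hasc | hdesc
    · have hTm : T z * T (cs.simple i) = T (z * cs.simple i) :=
        hmul _ _ (by rw [cs.length_simple]; omega)
      rw [hTm, T.repr_self, Finsupp.single_apply]
      by_cases hx : z * cs.simple i = x
      · rw [if_pos hx, map_one, mul_one, mul_one, ← hx, hasc]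
      · rw [if_neg hx, map_zero, mul_zero, mul_zero]
    · set z' := z * cs.simple i with hz'
      have hzz : z' * cs.simple i = z := cs.simple_mul_simple_cancel_right i
      have hlen : cs.length z' + 1 = cs.length z := hdesc
      have hTz : T z' * T (cs.simple i) = T z := by
        rw [hmul _ _ (by rw [hzz, cs.length_simple]; omega), hzz]
      have hmulsz : T z * T (cs.simple i) = q • T z - T z + q • T z' := by
        calc T z * T (cs.simple i) = T z' * (T (cs.simple i) * T (cs.simple i)) := by
              rw [← mul_assoc, hTz]
          _ = T z' * (q • T (cs.simple i) - T (cs.simple i) + q • (1:H)) := by rw [hsq i]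
          _ = q • (T z' * T (cs.simple i)) - T z' * T (cs.simple i) + q • T z' := by
              rw [mul_add, mul_sub, mul_smul_comm, mul_smul_comm, mul_one]
          _ = q • T z - T z + q • T z' := by rw [hTz]
      have hne : z' ≠ z := fun hcon => by rw [hcon] at hlen; omega
      rw [hmulsz]
      simp only [map_add, map_sub, map_smul, Module.Basis.repr_self, Finsupp.add_apply,
        Finsupp.sub_apply, Finsupp.smul_apply, Finsupp.single_apply, smul_eq_mul]
      by_cases hx1 : z = x
      · have hx2 : ¬ (z' = x) := by rw [← hx1]; exact hne
        rw [if_pos hx1, if_neg hx2, ← hx1]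
        simp only [map_zero, map_one, map_mul, map_sub, map_add, hσq, mul_zero, mul_one,
          add_zero, sub_zero, zero_add]
        rw [pow_succ]
        field_simp
        ring
      · by_cases hx2 : z' = x
        · rw [if_neg hx1, if_pos hx2, ← hx2, ← hlen]
          simp only [map_zero, map_one, map_mul, map_sub, map_add, hσq, mul_zero, mul_one,
            add_zero, sub_zero, zero_add]
          rw [pow_succ, pow_succ]
          field_simp
        · rw [if_neg hx1, if_neg hx2]
          simp
  -- base case: `u = 1`
  have baseL : ∀ (y x : W),
      (-q) ^ (cs.length y + cs.length (1 : W)) * σ (T.repr (T (1:W) * T y) x)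
        = (-q) ^ (cs.length x) * T.repr (T (1:W) * T y) x := by
    intro y x
    have h1 : cs.length (1 : W) = 0 := cs.length_eq_zero_iff.mpr rfl
    rw [h1, add_zero, hone, one_mul, T.repr_self, Finsupp.single_apply]
    by_cases hx : y = x
    · rw [if_pos hx, map_one, mul_one, mul_one, hx]
    · rw [if_neg hx, map_zero, mul_zero, mul_zero]
  have baseR : ∀ (y x : W),
      (-q) ^ (cs.length y + cs.length (1 : W)) * σ (T.repr (T y * T (1:W)) x)
        = (-q) ^ (cs.length x) * T.repr (T y * T (1:W)) x := by
    intro y x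
    have h1 : cs.length (1 : W) = 0 := cs.length_eq_zero_iff.mpr rfl
    rw [h1, add_zero, hone, mul_one, T.repr_self, Finsupp.single_apply]
    by_cases hx : y = x
    · rw [if_pos hx, map_one, mul_one, mul_one, hx]
    · rw [if_neg hx, map_zero, mul_zero, mul_zero]
  -- induction: left multiplication by `T u`
  have PL : ∀ (k : ℕ) (u : W), cs.length u ≤ k → ∀ (y x : W),
      (-q) ^ (cs.length y + cs.length u) * σ (T.repr (T u * T y) x)
        = (-q) ^ (cs.length x) * T.repr (T u * T y) x := by
    intro k
    induction k with
    | zero =>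
      intro u hu y x
      have h1 : u = 1 := cs.length_eq_zero_iff.mp (Nat.le_zero.mp hu)
      rw [h1]; exact baseL y x
    | succ k ih =>
      intro u hu y x
      by_cases h1 : u = 1
      · rw [h1]; exact baseL y x
      · obtain ⟨i, hi⟩ := cs.exists_leftDescent_of_ne_one h1
        have hdesc : cs.length (cs.simple i * u) + 1 = cs.length u := cs.isLeftDescent_iff.mp hi
        set u₀ := cs.simple i * u with hu₀
        have huu : cs.simple i * u₀ = u := cs.simple_mul_simple_cancel_left i
        have hTu : T (cs.simple i) * T u₀ = T u := by
          rw [hmul _ _ (by rw [huu, cs.length_simple]; omega), huu]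
        have hassoc : T u * T y = T (cs.simple i) * (T u₀ * T y) := by
          rw [← hTu, mul_assoc]
        have hexp : cs.length y + cs.length u = (cs.length y + cs.length u₀) + 1 := by omega
        rw [hassoc, hexp, repr_mul_left, map_sum, Finset.mul_sum, Finset.mul_sum]
        refine Finset.sum_congr rfl fun z _ => ?_
        rw [map_mul]
        have h1' := ih u₀ (by omega) y z
        have h2' := stepL i z x
        calc (-q) ^ (cs.length y + cs.length u₀ + 1)
              * (σ (T.repr (T u₀ * T y) z) * σ (T.repr (T (cs.simple i) * T z) x))
            = ((-q) ^ (cs.length y + cs.length u₀) * σ (T.repr (T u₀ * T y) z))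
                * ((-q) * σ (T.repr (T (cs.simple i) * T z) x)) := by ring
          _ = ((-q) ^ (cs.length z) * T.repr (T u₀ * T y) z)
                * ((-q) * σ (T.repr (T (cs.simple i) * T z) x)) := by rw [h1']
          _ = T.repr (T u₀ * T y) z
                * ((-q) ^ (cs.length z + 1) * σ (T.repr (T (cs.simple i) * T z) x)) := by ring
          _ = T.repr (T u₀ * T y) z
                * ((-q) ^ (cs.length x) * T.repr (T (cs.simple i) * T z) x) := by rw [h2']
          _ = (-q) ^ (cs.length x)
                * (T.repr (T u₀ * T y) z * T.repr (T (cs.simple i) * T z) x) := by ring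
  -- induction: right multiplication by `T u`
  have PR : ∀ (k : ℕ) (u : W), cs.length u ≤ k → ∀ (y x : W),
      (-q) ^ (cs.length y + cs.length u) * σ (T.repr (T y * T u) x)
        = (-q) ^ (cs.length x) * T.repr (T y * T u) x := by
    intro k
    induction k with
    | zero =>
      intro u hu y x
      have h1 : u = 1 := cs.length_eq_zero_iff.mp (Nat.le_zero.mp hu)
      rw [h1]; exact baseR y x
    | succ k ih =>
      intro u hu y x
      by_cases h1 : u = 1
      · rw [h1]; exact baseR y x
      · obtain ⟨i, hi⟩ := cs.exists_rightDescent_of_ne_one h1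
        have hdesc : cs.length (u * cs.simple i) + 1 = cs.length u := cs.isRightDescent_iff.mp hi
        set u₀ := u * cs.simple i with hu₀
        have huu : u₀ * cs.simple i = u := cs.simple_mul_simple_cancel_right i
        have hTu : T u₀ * T (cs.simple i) = T u := by
          rw [hmul _ _ (by rw [huu, cs.length_simple]; omega), huu]
        have hassoc : T y * T u = (T y * T u₀) * T (cs.simple i) := by
          rw [← hTu, mul_assoc]
        have hexp : cs.length y + cs.length u = (cs.length y + cs.length u₀) + 1 := by omega
        rw [hassoc, hexp, repr_mul_right, map_sum, Finset.mul_sum, Finset.mul_sum]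
        refine Finset.sum_congr rfl fun z _ => ?_
        rw [map_mul]
        have h1' := ih u₀ (by omega) y z
        have h2' := stepR i z x
        calc (-q) ^ (cs.length y + cs.length u₀ + 1)
              * (σ (T.repr (T y * T u₀) z) * σ (T.repr (T z * T (cs.simple i)) x))
            = ((-q) ^ (cs.length y + cs.length u₀) * σ (T.repr (T y * T u₀) z))
                * ((-q) * σ (T.repr (T z * T (cs.simple i)) x)) := by ring
          _ = ((-q) ^ (cs.length z) * T.repr (T y * T u₀) z)
                * ((-q) * σ (T.repr (T z * T (cs.simple i)) x)) := by rw [h1']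
          _ = T.repr (T y * T u₀) z
                * ((-q) ^ (cs.length z + 1) * σ (T.repr (T z * T (cs.simple i)) x)) := by ring
          _ = T.repr (T y * T u₀) z
                * ((-q) ^ (cs.length x) * T.repr (T z * T (cs.simple i)) x) := by rw [h2']
          _ = (-q) ^ (cs.length x)
                * (T.repr (T y * T u₀) z * T.repr (T z * T (cs.simple i)) x) := by ring
  -- the diagonal entries
  have key : ∀ x : W,
      (-q) ^ n * σ (T.repr (T w * (T x * T (w'⁻¹))) x) = T.repr (T w * (T x * T (w'⁻¹))) x := by
    intro x
    have hfull : (-q) ^ (cs.length x + n) * σ (T.repr (T w * (T x * T (w'⁻¹))) x)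
        = (-q) ^ (cs.length x) * T.repr (T w * (T x * T (w'⁻¹))) x := by
      have hexp : cs.length x + n = (cs.length x + cs.length (w'⁻¹)) + cs.length w := by
        rw [hn, cs.length_inv]; ring
      rw [hexp, repr_mul_left, map_sum, Finset.mul_sum, Finset.mul_sum]
      refine Finset.sum_congr rfl fun z _ => ?_
      rw [map_mul]
      have h1' := PR (cs.length (w'⁻¹)) (w'⁻¹) le_rfl x z
      have h2' := PL (cs.length w) w le_rfl z x
      calc (-q) ^ (cs.length x + cs.length (w'⁻¹) + cs.length w)
            * (σ (T.repr (T x * T (w'⁻¹)) z) * σ (T.repr (T w * T z) x))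
          = ((-q) ^ (cs.length x + cs.length (w'⁻¹)) * σ (T.repr (T x * T (w'⁻¹)) z))
              * ((-q) ^ (cs.length w) * σ (T.repr (T w * T z) x)) := by ring
        _ = ((-q) ^ (cs.length z) * T.repr (T x * T (w'⁻¹)) z)
              * ((-q) ^ (cs.length w) * σ (T.repr (T w * T z) x)) := by rw [h1']
        _ = T.repr (T x * T (w'⁻¹)) z
              * ((-q) ^ (cs.length z + cs.length w) * σ (T.repr (T w * T z) x)) := by ring
        _ = T.repr (T x * T (w'⁻¹)) z
              * ((-q) ^ (cs.length x) * T.repr (T w * T z) x) := by rw [h2']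
        _ = (-q) ^ (cs.length x)
              * (T.repr (T x * T (w'⁻¹)) z * T.repr (T w * T z) x) := by ring
    have hpow : ((-q) ^ (cs.length x) : RatFunc ℚ) ≠ 0 := pow_ne_zero _ hvne
    apply mul_left_cancel₀ hpow
    calc (-q) ^ (cs.length x) * ((-q) ^ n * σ (T.repr (T w * (T x * T (w'⁻¹))) x))
        = (-q) ^ (cs.length x + n) * σ (T.repr (T w * (T x * T (w'⁻¹))) x) := by ring
      _ = (-q) ^ (cs.length x) * T.repr (T w * (T x * T (w'⁻¹))) x := hfull
  -- the trace as a sum of diagonal entries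
  have htr : LinearMap.trace (RatFunc ℚ) H
      ((LinearMap.mulLeft (RatFunc ℚ) (T w)).comp (LinearMap.mulRight (RatFunc ℚ) (T w'⁻¹)))
      = ∑ x : W, T.repr (T w * (T x * T (w'⁻¹))) x := by
    rw [LinearMap.trace_eq_matrix_trace (RatFunc ℚ) T, Matrix.trace]
    refine Finset.sum_congr rfl fun x _ => ?_
    rw [Matrix.diag_apply, LinearMap.toMatrix_apply]
    simp [LinearMap.mulLeft_apply, LinearMap.mulRight_apply]
  -- the functional equation in `ℚ(v)`
  have hσaev : σ (Polynomial.aeval q N) = Polynomial.aeval (q⁻¹ : RatFunc ℚ) N := by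
    rw [Polynomial.aeval_def, Polynomial.hom_eval₂,
      Subsingleton.elim (σ.comp (algebraMap ℚ (RatFunc ℚ))) (algebraMap ℚ (RatFunc ℚ)),
      hσq, ← Polynomial.aeval_def]
  have hfe : Polynomial.aeval q N = (-q) ^ n * Polynomial.aeval (q⁻¹ : RatFunc ℚ) N := by
    rw [← hσaev]
    calc Polynomial.aeval q N = ∑ x : W, T.repr (T w * (T x * T (w'⁻¹))) x := by
          rw [hN, htr]
      _ = ∑ x : W, (-q) ^ n * σ (T.repr (T w * (T x * T (w'⁻¹))) x) := by
          refine Finset.sum_congr rfl fun x _ => (key x).symm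
      _ = (-q) ^ n * σ (∑ x : W, T.repr (T w * (T x * T (w'⁻¹))) x) := by
          rw [map_sum, Finset.mul_sum]
      _ = (-q) ^ n * σ (Polynomial.aeval q N) := by rw [hN, htr]
  -- converting to a polynomial identity via `reflect`
  set m : ℕ := max n N.natDegree with hm
  have hnm : n ≤ m := le_max_left _ _
  letI : Invertible (q⁻¹ : RatFunc ℚ) := invertibleOfNonzero (inv_ne_zero hq0)
  have hinvof : (⅟(q⁻¹ : RatFunc ℚ)) = q := by
    rw [invOf_eq_inv, inv_inv]
  have hreflect : Polynomial.aeval q (Polynomial.reflect m N) * (q⁻¹) ^ m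
      = Polynomial.aeval (q⁻¹ : RatFunc ℚ) N := by
    have h := Polynomial.eval₂_reflect_mul_pow (algebraMap ℚ (RatFunc ℚ)) (q⁻¹) m N
      (le_max_right _ _)
    rw [hinvof] at h
    rw [Polynomial.aeval_def, Polynomial.aeval_def]
    exact h
  have hq1 : (q : RatFunc ℚ) ^ (m - n) * (q ^ n * (q⁻¹) ^ m) = 1 := by
    rw [inv_pow, ← mul_assoc, ← pow_add, Nat.sub_add_cancel hnm]
    exact mul_inv_cancel₀ (pow_ne_zero _ hq0)
  have hpoly : Polynomial.aeval q ((Polynomial.X : ℚ[X]) ^ (m - n) * N)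
      = Polynomial.aeval q (Polynomial.C ((-1 : ℚ)) ^ n * Polynomial.reflect m N) := by
    rw [map_mul, map_mul, map_pow, map_pow, Polynomial.aeval_X, Polynomial.aeval_C]
    rw [hfe, ← hreflect, neg_pow]
    have hm1 : (algebraMap ℚ (RatFunc ℚ)) (-1 : ℚ) = -1 := by
      rw [map_neg, map_one]
    rw [hm1]
    calc q ^ (m - n) * (((-1 : RatFunc ℚ) ^ n * q ^ n)
          * (Polynomial.aeval q (Polynomial.reflect m N) * (q⁻¹) ^ m))
        = ((-1 : RatFunc ℚ) ^ n * Polynomial.aeval q (Polynomial.reflect m N))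
            * (q ^ (m - n) * (q ^ n * (q⁻¹) ^ m)) := by ring
      _ = ((-1 : RatFunc ℚ) ^ n * Polynomial.aeval q (Polynomial.reflect m N)) * 1 := by
          rw [hq1]
      _ = (-1 : RatFunc ℚ) ^ n * Polynomial.aeval q (Polynomial.reflect m N) := mul_one _
  have hP : (Polynomial.X : ℚ[X]) ^ (m - n) * N
      = Polynomial.C ((-1 : ℚ)) ^ n * Polynomial.reflect m N := by
    have h0 := aux_aeval_Xsq_injective
      ((Polynomial.X : ℚ[X]) ^ (m - n) * N - Polynomial.C ((-1 : ℚ)) ^ n * Polynomial.reflect m N)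
      (by rw [map_sub]; rw [hqdef] at hpoly; rw [hpoly, sub_self])
    exact sub_eq_zero.mp h0
  -- extracting coefficients
  intro i hi
  have hc := congrArg (fun P : ℚ[X] => P.coeff ((m - n) + i)) hP
  have hL : ((Polynomial.X : ℚ[X]) ^ (m - n) * N).coeff ((m - n) + i) = N.coeff i := by
    rw [Polynomial.X_pow_mul, Polynomial.coeff_mul_X_pow' N (m - n) ((m - n) + i)]
    rw [if_pos (Nat.le_add_right _ _)]
    congr 1
    omega
  have hR : (Polynomial.C ((-1 : ℚ)) ^ n * Polynomial.reflect m N).coeff ((m - n) + i)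
      = (-1 : ℚ) ^ n * N.coeff (n - i) := by
    rw [← map_pow, Polynomial.coeff_C_mul, Polynomial.coeff_reflect]
    congr 2
    rw [Polynomial.revAt_le (by omega)]
    omega
  rw [hL, hR] at hc
  exact hc
end
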